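/- Let r ≥ 1 be a natural number, a, b ∈ ℤ with b ≥ a + 2r, and let L : ℤ × ℝ^{r+1} → ℝ, written L(t, u_0, …, u_r), be such that for each t the map (u_0, …, u_r) ↦ L(t, u_0, …, u_r) is continuously differentiable. For y : ℤ → ℝ set 𝓛[y] = Σ_{t=a+r}^{b} L(t, y(t−r), (∇y)(t−r+1), …, (∇^{r−1}y)(t−1), (∇^r y)(t)). Suppose y* : ℤ → ℝ satisfies the boundary conditions (∇^i y*)(a + r − 1) = α_i and (∇^i y*)(b) = β_i for i = 0, …, r − 1, and is a weak local extremum: there exists δ > 0 such that 𝓛[y*] ≤ 𝓛[y] (or 𝓛[y*] ≥ 𝓛[y]) for every y : ℤ → ℝ satisfying the same boundary conditions with max_{a ≤ t ≤ b} |y(t) − y*(t)| < δ. Then, setting g_i(t) = ∂L/∂u_i(t, y*(t−r), (∇y*)(t−r+1), …, (∇^r y*)(t)), one has Σ_{i=0}^{r} (−1)^i (∇^i g_i)(t) = 0 for all t with a + 2r ≤ t ≤ b. -/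

import Mathlib

/-- The backward difference (nabla derivative) on the time scale `T = ℤ`:
`(∇f)(t) = f(t) − f(t−1)`. -/
def intNabla (f : ℤ → ℝ) : ℤ → ℝ := fun t => f t - f (t - 1)

lemma intNabla_iter (i : ℕ) (f : ℤ → ℝ) (t : ℤ) :
    intNabla^[i] f t =
      ∑ k ∈ Finset.range (i + 1), (-1 : ℝ) ^ k * (i.choose k) * f (t - (k : ℤ)) := by
  induction i generalizing t with
  | zero => simp
  | succ n ih =>
    rw [Function.iterate_succ_apply']
    show intNabla^[n] f t - intNabla^[n] f (t - 1) = _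
    have key : ∀ k ∈ Finset.range (n + 2),
        (-1 : ℝ) ^ k * ((n + 1).choose k) * f (t - (k : ℤ)) =
        (-1 : ℝ) ^ k * (n.choose k) * f (t - (k : ℤ)) +
        (if k = 0 then 0 else (-1 : ℝ) ^ k * (n.choose (k - 1)) * f (t - (k : ℤ))) := by
      intro k _
      cases k with
      | zero => simp
      | succ m => simp [Nat.choose_succ_succ, Nat.cast_add]; ring
    rw [Finset.sum_congr rfl key, Finset.sum_add_distrib]
    have h1 : ∑ k ∈ Finset.range (n + 2), (-1 : ℝ) ^ k * (n.choose k) * f (t - (k : ℤ)) =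
        ∑ k ∈ Finset.range (n + 1), (-1 : ℝ) ^ k * (n.choose k) * f (t - (k : ℤ)) := by
      rw [Finset.sum_range_succ, Nat.choose_succ_self]
      simp
    have h2 : (∑ k ∈ Finset.range (n + 2),
        if k = 0 then (0:ℝ) else (-1 : ℝ) ^ k * (n.choose (k - 1)) * f (t - (k : ℤ))) =
        -∑ k ∈ Finset.range (n + 1), (-1 : ℝ) ^ k * (n.choose k) * f (t - 1 - (k : ℤ)) := by
      rw [Finset.sum_range_succ']
      simp only [if_pos rfl, add_zero, if_neg (Nat.succ_ne_zero _), Nat.succ_sub_one,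
        if_true]
      rw [← Finset.sum_neg_distrib]
      apply Finset.sum_congr rfl
      intro k _
      have : t - ((k : ℤ) + 1) = t - 1 - (k : ℤ) := by ring
      push_cast
      rw [this]
      ring
    rw [h1, h2, ih, ih]
    ring

lemma intNabla_iter_linear (i : ℕ) (f g : ℤ → ℝ) (c : ℝ) (t : ℤ) :
    intNabla^[i] (fun s => f s + c * g s) t = intNabla^[i] f t + c * intNabla^[i] g t := by
  simp only [intNabla_iter, Finset.mul_sum, ← Finset.sum_add_distrib]
  apply Finset.sum_congr rfl
  intro k _
  ring

lemma my_deriv_update {m : ℕ} (F : (Fin m → ℝ) → ℝ) (u : Fin m → ℝ)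
    (hF : DifferentiableAt ℝ F u) (i : Fin m) :
    deriv (fun z => F (Function.update u i z)) (u i) = fderiv ℝ F u (Pi.single i 1) := by
  have h1 : ∀ z : ℝ, Function.update u i z = u + (z - u i) • (Pi.single i (1:ℝ) : Fin m → ℝ) := by
    intro z
    funext j
    by_cases h : j = i
    · subst h; simp
    · simp [Function.update, h, Pi.single_eq_of_ne h]
  have h2 : HasDerivAt (fun z : ℝ => u + (z - u i) • (Pi.single i (1:ℝ) : Fin m → ℝ))
      (Pi.single i (1:ℝ) : Fin m → ℝ) (u i) := by
    have := (((hasDerivAt_id (u i)).sub_const (u i)).smul_const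
      (Pi.single i (1:ℝ) : Fin m → ℝ)).const_add u
    simpa using this
  have hF' : HasFDerivAt F (fderiv ℝ F u)
      (u + ((u i) - u i) • (Pi.single i (1:ℝ) : Fin m → ℝ)) := by
    simpa using hF.hasFDerivAt
  have h4 := hF'.comp_hasDerivAt (u i) h2
  have h3 : HasDerivAt (fun z => F (Function.update u i z))
      (fderiv ℝ F u (Pi.single i 1)) (u i) := by
    refine h4.congr_of_eventuallyEq ?_
    filter_upwards with z
    rw [h1]
    rfl
  exact h3.deriv

lemma fderiv_apply_eq_sum {m : ℕ} (F : (Fin m → ℝ) → ℝ) (u v : Fin m → ℝ)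
    (hF : DifferentiableAt ℝ F u) :
    fderiv ℝ F u v = ∑ i : Fin m, v i * fderiv ℝ F u (Pi.single i 1) := by
  have hv : v = ∑ i : Fin m, v i • (Pi.single i 1 : Fin m → ℝ) := by
    funext j
    simp [Pi.single_apply, Finset.sum_ite_eq', mul_comm]
  conv_lhs => rw [hv]
  rw [map_sum]
  apply Finset.sum_congr rfl
  intro i _
  rw [(fderiv ℝ F u).map_smul]
  rfl

/-- The higher-order nabla Lagrangian functional on `T = ℤ`:
`𝓛[y] = Σ_{t=a+r}^{b} L(t, y(t−r), (∇y)(t−r+1), …, (∇^{r−1}y)(t−1), (∇ʳy)(t))`. -/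
noncomputable def intNablaLagrangianFunctional (r : ℕ) (a b : ℤ)
    (L : ℤ → (Fin (r + 1) → ℝ) → ℝ) (y : ℤ → ℝ) : ℝ :=
  ∑ t ∈ Finset.Icc (a + (r : ℤ)) b,
    L t (fun i : Fin (r + 1) => intNabla^[(i : ℕ)] y (t - ((r : ℤ) - ((i : ℕ) : ℤ))))

/-- Euler-Lagrange equation for the higher-order nabla variational problem (P)
on the time scale `T = ℤ`: if for each `t` the map `(u₀,…,u_r) ↦ L(t,u₀,…,u_r)` is
`C¹` and `y*` is a weak local extremum of `𝓛` subject to the boundary conditions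
`(∇ⁱy)(a+r−1) = αᵢ`, `(∇ⁱy)(b) = βᵢ` (`i = 0,…,r−1`), then, with
`gᵢ(t) = ∂L/∂uᵢ(t, y*(t−r), (∇y*)(t−r+1), …, (∇ʳy*)(t))`, one has
`Σ_{i=0}^{r} (−1)ⁱ (∇ⁱgᵢ)(t) = 0` for all `a+2r ≤ t ≤ b`. -/
theorem euler_lagrange_higher_order_int (r : ℕ) (hr : 1 ≤ r) (a b : ℤ)
    (hab : a + 2 * (r : ℤ) ≤ b) (L : ℤ → (Fin (r + 1) → ℝ) → ℝ)
    (hL : ∀ t : ℤ, ContDiff ℝ 1 (L t))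
    (α β : ℕ → ℝ) (ystar : ℤ → ℝ)
    (hbc : ∀ i < r, intNabla^[i] ystar (a + (r : ℤ) - 1) = α i ∧
                    intNabla^[i] ystar b = β i)
    (hext : ∃ δ > (0 : ℝ),
      (∀ y : ℤ → ℝ,
        (∀ i < r, intNabla^[i] y (a + (r : ℤ) - 1) = α i ∧ intNabla^[i] y b = β i) →
        (∀ t : ℤ, a ≤ t → t ≤ b → |y t - ystar t| < δ) →
        intNablaLagrangianFunctional r a b L ystar ≤
          intNablaLagrangianFunctional r a b L y) ∨
      (∀ y : ℤ → ℝ,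
        (∀ i < r, intNabla^[i] y (a + (r : ℤ) - 1) = α i ∧ intNabla^[i] y b = β i) →
        (∀ t : ℤ, a ≤ t → t ≤ b → |y t - ystar t| < δ) →
        intNablaLagrangianFunctional r a b L y ≤
          intNablaLagrangianFunctional r a b L ystar)) :
    ∀ t : ℤ, a + 2 * (r : ℤ) ≤ t → t ≤ b →
      ∑ i : Fin (r + 1), (-1 : ℝ) ^ (i : ℕ) *
        intNabla^[(i : ℕ)]
          (fun s => deriv
            (fun z => L s (Function.update
              (fun j : Fin (r + 1) =>
                intNabla^[(j : ℕ)] ystar (s - ((r : ℤ) - ((j : ℕ) : ℤ)))) i z))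
            (intNabla^[(i : ℕ)] ystar (s - ((r : ℤ) - ((i : ℕ) : ℤ))))) t = 0 := by
  intro t₀ ht₀a ht₀b
  obtain ⟨δ', hδ', hext⟩ := hext
  -- the variation: a delta function at t₀ - r
  set d : ℤ → ℝ := fun s => if s = t₀ - (r : ℤ) then 1 else 0 with hd
  -- abbreviations
  let u : ℤ → Fin (r + 1) → ℝ :=
    fun t i => intNabla^[(i : ℕ)] ystar (t - ((r : ℤ) - ((i : ℕ) : ℤ)))
  let v : ℤ → Fin (r + 1) → ℝ :=
    fun t i => intNabla^[(i : ℕ)] d (t - ((r : ℤ) - ((i : ℕ) : ℤ)))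
  let g : Fin (r + 1) → ℤ → ℝ :=
    fun i s => deriv (fun z => L s (Function.update (u s) i z)) (u s i)
  let φ : ℝ → ℝ := fun ε => ∑ t ∈ Finset.Icc (a + (r : ℤ)) b, L t (u t + ε • v t)
  -- the functional evaluated at the perturbed curve
  have hφy : ∀ ε : ℝ,
      intNablaLagrangianFunctional r a b L (fun s => ystar s + ε * d s) = φ ε := by
    intro ε
    apply Finset.sum_congr rfl
    intro t _
    congr 1
    funext i
    show intNabla^[(i : ℕ)] (fun s => ystar s + ε * d s) _ = u t i + ε * v t i
    rw [intNabla_iter_linear]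
  -- support of iterated nablas of d
  have hsupp : ∀ (i : ℕ) (s : ℤ), (∀ k : ℕ, k ≤ i → s - (k : ℤ) ≠ t₀ - (r : ℤ)) →
      intNabla^[i] d s = 0 := by
    intro i s hs
    rw [intNabla_iter]
    apply Finset.sum_eq_zero
    intro k hk
    have : d (s - (k : ℤ)) = 0 := by
      rw [hd]
      exact if_neg (hs k (Nat.lt_succ_iff.mp (Finset.mem_range.mp hk)))
    rw [this, mul_zero]
  have hrb : (1 : ℤ) ≤ (r : ℤ) := by exact_mod_cast hr
  -- boundary vanishing of variations
  have hbd1 : ∀ i < r, intNabla^[i] d (a + (r : ℤ) - 1) = 0 := by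
    intro i hi
    apply hsupp
    intro k hk
    have : (k : ℤ) ≤ (i : ℤ) := by exact_mod_cast hk
    have hi' : (i : ℤ) < (r : ℤ) := by exact_mod_cast hi
    omega
  have hbd2 : ∀ i < r, intNabla^[i] d b = 0 := by
    intro i hi
    apply hsupp
    intro k hk
    have : (k : ℤ) ≤ (i : ℤ) := by exact_mod_cast hk
    have hi' : (i : ℤ) < (r : ℤ) := by exact_mod_cast hi
    omega
  -- φ has a local extremum at 0
  have hφ0 : intNablaLagrangianFunctional r a b L ystar = φ 0 := by
    rw [← hφy 0]
    congr 1
    funext s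
    ring
  have hbcy : ∀ ε : ℝ, ∀ i < r,
      intNabla^[i] (fun s => ystar s + ε * d s) (a + (r : ℤ) - 1) = α i ∧
      intNabla^[i] (fun s => ystar s + ε * d s) b = β i := by
    intro ε i hi
    rw [intNabla_iter_linear, intNabla_iter_linear, hbd1 i hi, hbd2 i hi,
      (hbc i hi).1, (hbc i hi).2]
    constructor <;> ring
  have hclose : ∀ ε : ℝ, |ε| < δ' → ∀ t : ℤ, a ≤ t → t ≤ b →
      |(fun s => ystar s + ε * d s) t - ystar t| < δ' := by
    intro ε hε t _ _
    have : |ystar t + ε * d t - ystar t| = |ε| * |d t| := by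
      rw [add_sub_cancel_left, abs_mul]
    rw [this]
    have hd1 : |d t| ≤ 1 := by
      rw [hd]
      dsimp only
      split <;> simp
    calc |ε| * |d t| ≤ |ε| * 1 := by
          exact mul_le_mul_of_nonneg_left hd1 (abs_nonneg ε)
      _ = |ε| := mul_one _
      _ < δ' := hε
  have hloc : IsLocalMin φ 0 ∨ IsLocalMax φ 0 := by
    rcases hext with h | h
    · left
      rw [IsLocalMin, IsMinFilter]
      rw [Metric.eventually_nhds_iff_ball]
      refine ⟨δ', hδ', fun ε hε => ?_⟩
      rw [Metric.mem_ball, Real.dist_eq, sub_zero] at hε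
      rw [← hφ0, ← hφy ε]
      exact h _ (hbcy ε) (hclose ε hε)
    · right
      rw [IsLocalMax, IsMaxFilter]
      rw [Metric.eventually_nhds_iff_ball]
      refine ⟨δ', hδ', fun ε hε => ?_⟩
      rw [Metric.mem_ball, Real.dist_eq, sub_zero] at hε
      rw [← hφ0, ← hφy ε]
      exact h _ (hbcy ε) (hclose ε hε)
  -- derivative of φ at 0
  have hder : HasDerivAt φ
      (∑ t ∈ Finset.Icc (a + (r : ℤ)) b, fderiv ℝ (L t) (u t) (v t)) 0 := by
    apply HasDerivAt.fun_sum
    intro t _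
    have hat : HasDerivAt (fun ε : ℝ => u t + ε • v t) (v t) 0 := by
      simpa using ((hasDerivAt_id (0 : ℝ)).smul_const (v t)).const_add (u t)
    have hf : HasFDerivAt (L t) (fderiv ℝ (L t) (u t)) (u t + (0 : ℝ) • v t) := by
      simpa using (((hL t).differentiable one_ne_zero) (u t)).hasFDerivAt
    exact hf.comp_hasDerivAt 0 hat
  have hS0 : (∑ t ∈ Finset.Icc (a + (r : ℤ)) b, fderiv ℝ (L t) (u t) (v t)) = 0 := by
    rw [← hder.deriv]
    rcases hloc with h | h
    · exact h.deriv_eq_zero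
    · exact h.deriv_eq_zero
  -- rewrite S as the Euler–Lagrange sum at t₀
  have hG : ∀ (i : Fin (r + 1)) (t : ℤ),
      fderiv ℝ (L t) (u t) (Pi.single i 1) = g i t := by
    intro i t
    exact (my_deriv_update (L t) (u t) (((hL t).differentiable one_ne_zero) (u t)) i).symm
  have hir : ∀ i : Fin (r + 1), (i : ℕ) ≤ r := fun i => Nat.lt_succ_iff.mp i.isLt
  have hstep : ∀ i : Fin (r + 1),
      ∑ t ∈ Finset.Icc (a + (r : ℤ)) b, v t i * g i t =
      (-1 : ℝ) ^ (i : ℕ) * intNabla^[(i : ℕ)] (g i) t₀ := by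
    intro i
    have hvt : ∀ t : ℤ, v t i * g i t =
        ∑ k ∈ Finset.range ((i : ℕ) + 1),
          (-1 : ℝ) ^ k * ((i : ℕ).choose k) *
            (if t = t₀ - (i : ℤ) + k then g i t else 0) := by
      intro t
      show intNabla^[(i : ℕ)] d (t - ((r : ℤ) - ((i : ℕ) : ℤ))) * g i t = _
      rw [intNabla_iter, Finset.sum_mul]
      apply Finset.sum_congr rfl
      intro k _
      have : d (t - ((r : ℤ) - ((i : ℕ) : ℤ)) - (k : ℤ)) =
          if t = t₀ - (i : ℤ) + k then 1 else 0 := by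
        show (if t - ((r : ℤ) - ((i : ℕ) : ℤ)) - (k : ℤ) = t₀ - (r : ℤ) then (1:ℝ) else 0) = _
        have hiff : (t - ((r : ℤ) - ((i : ℕ) : ℤ)) - (k : ℤ) = t₀ - (r : ℤ)) ↔
            (t = t₀ - ((i : ℕ) : ℤ) + (k : ℤ)) := by omega
        rw [if_congr hiff rfl rfl]
      rw [this]
      by_cases h : t = t₀ - (i : ℤ) + k <;> simp [h] <;> ring
    rw [Finset.sum_congr rfl (fun t _ => hvt t), Finset.sum_comm]
    have hmem : ∀ k ∈ Finset.range ((i : ℕ) + 1),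
        t₀ - ((i : ℕ) : ℤ) + (k : ℤ) ∈ Finset.Icc (a + (r : ℤ)) b := by
      intro k hk
      rw [Finset.mem_Icc]
      have hk' : (k : ℤ) ≤ ((i : ℕ) : ℤ) := by
        exact_mod_cast Nat.lt_succ_iff.mp (Finset.mem_range.mp hk)
      have hi' : ((i : ℕ) : ℤ) ≤ (r : ℤ) := by exact_mod_cast hir i
      have hk0 : (0 : ℤ) ≤ (k : ℤ) := Int.natCast_nonneg k
      omega
    have hsum1 : ∀ k ∈ Finset.range ((i : ℕ) + 1),
        (∑ t ∈ Finset.Icc (a + (r : ℤ)) b,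
          (-1 : ℝ) ^ k * ((i : ℕ).choose k) *
            (if t = t₀ - (i : ℤ) + k then g i t else 0)) =
        (-1 : ℝ) ^ k * ((i : ℕ).choose k) * g i (t₀ - (i : ℤ) + k) := by
      intro k hk
      rw [← Finset.mul_sum]
      congr 1
      rw [Finset.sum_ite_eq' (Finset.Icc (a + (r : ℤ)) b) (t₀ - (i : ℤ) + k) (g i),
        if_pos (hmem k hk)]
    rw [Finset.sum_congr rfl hsum1, intNabla_iter, Finset.mul_sum]
    rw [← Finset.sum_range_reflect]
    apply Finset.sum_congr rfl
    intro j hj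
    have hj' : j ≤ (i : ℕ) := Nat.lt_succ_iff.mp (Finset.mem_range.mp hj)
    rw [Nat.add_sub_cancel]  -- (i+1) - 1 - j  → i - j ??
    have hcast : ((((i : ℕ) - j : ℕ)) : ℤ) = ((i : ℕ) : ℤ) - (j : ℤ) := by
      exact Nat.cast_sub hj'
    have harg : t₀ - ((i : ℕ) : ℤ) + ((((i : ℕ) - j : ℕ)) : ℤ) = t₀ - (j : ℤ) := by
      rw [hcast]; ring
    rw [Nat.choose_symm hj', harg]
    have hpow : (-1 : ℝ) ^ ((i : ℕ) - j) = (-1 : ℝ) ^ (i : ℕ) * (-1 : ℝ) ^ j := by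
      have h1 : (-1 : ℝ) ^ ((i : ℕ) - j) * (-1 : ℝ) ^ j = (-1 : ℝ) ^ (i : ℕ) := by
        rw [← pow_add, Nat.sub_add_cancel hj']
      have h2 : (-1 : ℝ) ^ j * (-1 : ℝ) ^ j = 1 := by
        rw [← pow_add, ← two_mul, pow_mul]
        norm_num
      calc (-1 : ℝ) ^ ((i : ℕ) - j)
          = (-1 : ℝ) ^ ((i : ℕ) - j) * ((-1 : ℝ) ^ j * (-1 : ℝ) ^ j) := by rw [h2, mul_one]
        _ = ((-1 : ℝ) ^ ((i : ℕ) - j) * (-1 : ℝ) ^ j) * (-1 : ℝ) ^ j := by ring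
        _ = (-1 : ℝ) ^ (i : ℕ) * (-1 : ℝ) ^ j := by rw [h1]
    rw [hpow]
    ring
  -- put everything together
  have hfin : (∑ t ∈ Finset.Icc (a + (r : ℤ)) b, fderiv ℝ (L t) (u t) (v t)) =
      ∑ i : Fin (r + 1), (-1 : ℝ) ^ (i : ℕ) * intNabla^[(i : ℕ)] (g i) t₀ := by
    have : ∀ t ∈ Finset.Icc (a + (r : ℤ)) b,
        fderiv ℝ (L t) (u t) (v t) = ∑ i : Fin (r + 1), v t i * g i t := by
      intro t _
      rw [fderiv_apply_eq_sum (L t) (u t) (v t) (((hL t).differentiable one_ne_zero) (u t))]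
      exact Finset.sum_congr rfl fun i _ => by rw [hG]
    rw [Finset.sum_congr rfl this, Finset.sum_comm]
    exact Finset.sum_congr rfl fun i _ => hstep i
  show ∑ i : Fin (r + 1), (-1 : ℝ) ^ (i : ℕ) * intNabla^[(i : ℕ)] (g i) t₀ = 0
  rw [← hfin, hS0]
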